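/- Assume (AU) with bound N, and let S ∈ ℝ be the greatest value of u (i−1) + u i, i.e. u (i−1) + u i ≤ S for all i ∈ ℤ and S = u (i₀−1) + u i₀ for some i₀ (such S exists under (AU)). Then there exists Φ : ℤ → ℝ solving the γ-eigenproblem and satisfying (AΦ) if and only if k = min S 1; likewise, there exists Φ : ℤ → ℝ solving the δ-eigenproblem and satisfying (AΦ) if and only if k = min S 1. -/

import Mathlib

/-- `γ i = min (u i) (1 - u (i-1))`. -/
noncomputable def gam (u : ℤ → ℝ) (i : ℤ) : ℝ := min (u i) (1 - u (i - 1))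

/-- `δ i = min (u (i-1)) (1 - u i)`. -/
noncomputable def del (u : ℤ → ℝ) (i : ℤ) : ℝ := min (u (i - 1)) (1 - u i)

/-- `Φ` solves the γ-eigenproblem. -/
def SolvesG (u : ℤ → ℝ) (k : ℝ) (Φ : ℤ → ℝ) : Prop :=
  ∀ i : ℤ, max (Φ (i + 1) + gam u i - k) (Φ (i - 1) + gam u i) = Φ i

/-- `Φ` solves the δ-eigenproblem. -/
def SolvesD (u : ℤ → ℝ) (k : ℝ) (Φ : ℤ → ℝ) : Prop :=
  ∀ i : ℤ, max (Φ (i + 1) + del u i - k) (Φ (i - 1) + del u i) = Φ i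

/-- Condition (AΦ). -/
def APhi (k : ℝ) (Φ : ℤ → ℝ) : Prop :=
  ∀ M : ℤ, (∃ N' : ℤ, M ≤ N' ∧ Φ (N' + 1) = Φ N') ∧
    (∃ N'' : ℤ, M ≤ N'' ∧ Φ (-N'' - 1) = Φ (-N'') - k)



lemma exists_phi (d : ℤ → ℝ) : ∃ Φ : ℤ → ℝ, ∀ i, Φ i = Φ (i-1) + d i := by
  classical
  refine ⟨fun i => (∑ j ∈ Finset.Icc 1 i, d j) - ∑ j ∈ Finset.Icc (i+1) 0, d j, ?_⟩
  intro i
  dsimp only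
  rcases le_or_gt 1 i with hi | hi
  · obtain ⟨m, rfl⟩ : ∃ m, i = m + 1 := ⟨i - 1, by ring⟩
    have h1 : Finset.Icc (m+1+1) (0:ℤ) = ∅ := Finset.Icc_eq_empty (by omega)
    have h2 : Finset.Icc (m+1-1+1) (0:ℤ) = ∅ := Finset.Icc_eq_empty (by omega)
    have h5 : (m+1-1 : ℤ) = m := by ring
    have h3 : Finset.Icc (1:ℤ) (m+1) = insert (m+1) (Finset.Icc 1 m) := by
      ext x; simp only [Finset.mem_Icc, Finset.mem_insert]; omega
    have h4 : (m+1) ∉ Finset.Icc (1:ℤ) m := by simp [Finset.mem_Icc]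
    rw [h1, h2, h5, h3, Finset.sum_insert h4]
    simp
    ring
  · have h1 : Finset.Icc (1:ℤ) i = ∅ := Finset.Icc_eq_empty (by omega)
    have h2 : Finset.Icc (1:ℤ) (i-1) = ∅ := Finset.Icc_eq_empty (by omega)
    have h3 : Finset.Icc (i:ℤ) 0 = insert i (Finset.Icc (i+1) 0) := by
      ext x; simp only [Finset.mem_Icc, Finset.mem_insert]; omega
    have h4 : i ∉ Finset.Icc (i+1) (0:ℤ) := by simp [Finset.mem_Icc]
    have h5 : (i - 1 + 1 : ℤ) = i := by ring
    rw [h1, h2, h5, h3, Finset.sum_insert h4]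
    simp

lemma abstract (g : ℤ → ℝ) (M₀ : ℤ) (hM₀ : 0 < M₀)
    (hg0 : ∀ i : ℤ, (M₀ ≤ i ∨ i ≤ -M₀) → g i = 0)
    (c : ℝ) (hc1 : ∀ i : ℤ, g i + g (i+1) ≤ c)
    (p : ℤ) (hp : g p + g (p+1) = c) (hc0 : 0 ≤ c) (k : ℝ) :
    (∃ Φ : ℤ → ℝ, (∀ i : ℤ, max (Φ (i+1) + g i - k) (Φ (i-1) + g i) = Φ i) ∧ APhi k Φ)
      ↔ k = c := by
  constructor
  · rintro ⟨Φ, hs, ha⟩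
    -- k ≥ c
    have hA : ∀ i : ℤ, Φ (i+1) + g i - k ≤ Φ i := fun i => le_of_max_le_left (le_of_eq (hs i))
    have hB : ∀ i : ℤ, Φ (i-1) + g i ≤ Φ i := fun i => le_of_max_le_right (le_of_eq (hs i))
    have hcase : ∀ i : ℤ, Φ (i+1) + g i - k = Φ i ∨ Φ (i-1) + g i = Φ i := by
      intro i
      rcases max_choice (Φ (i+1) + g i - k) (Φ (i-1) + g i) with h | h
      · left; rw [← hs i, h]
      · right; rw [← hs i, h]
    have hkc : c ≤ k := by
      have h1 := hB (p+1)
      have h2 := hA p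
      simp only [add_sub_cancel_right] at h1
      nlinarith [hp]
    rcases eq_or_lt_of_le hkc with h | hck
    · exact h.symm
    -- now k > c ≥ 0; derive contradiction
    exfalso
    have hk0 : 0 < k := lt_of_le_of_lt hc0 hck
    obtain ⟨N', hN', hΦN'⟩ := (ha M₀).1
    obtain ⟨N'', hN'', hΦN''⟩ := (ha M₀).2
    -- downward induction: Φ (N' - t) = Φ (N' - t - 1) + g (N' - t)
    have key : ∀ t : ℕ, Φ (N' - t) = Φ (N' - t - 1) + g (N' - t) := by
      intro t
      induction t with
      | zero =>
        simp only [Nat.cast_zero, sub_zero]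
        rcases hcase N' with h | h
        · exfalso
          rw [hΦN', hg0 N' (Or.inl hN')] at h
          linarith
        · linarith [h]
      | succ t ih =>
        have hidx : (N' - (t+1:ℕ) : ℤ) + 1 = N' - t := by push_cast; ring
        rcases hcase (N' - (t+1:ℕ)) with h | h
        · exfalso
          rw [hidx] at h
          have hle := hc1 (N' - (t+1:ℕ))
          rw [hidx] at hle
          -- h : Φ (N'-t) + g (N'-(t+1)) - k = Φ (N'-(t+1))
          -- ih : Φ (N'-t) = Φ (N'-t-1) + g (N'-t)
          have he : (N' - (t+1:ℕ) : ℤ) = N' - t - 1 := by push_cast; ring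
          rw [he] at h hle
          rw [ih] at h
          -- Φ(N'-t-1) + g(N'-t) + g(N'-t-1) - k = Φ(N'-t-1)
          have : g (N' - t - 1) + g (N' - t) = k := by linarith
          linarith [hle, hck, this]
        · linarith [h]
    -- apply at -N''
    have hNle : -N'' ≤ N' := by omega
    obtain ⟨t, ht⟩ : ∃ t : ℕ, (-N'' : ℤ) = N' - t := ⟨(N' + N'').toNat, by omega⟩
    have h1 := key t
    rw [← ht] at h1
    -- Φ(-N'') = Φ(-N''-1) + g(-N'')
    have hg : g (-N'') = 0 := hg0 _ (Or.inr (by omega))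
    rw [hg, hΦN''] at h1
    linarith
  · rintro rfl
    classical
    set d : ℤ → ℝ := fun i => if i ≤ p then k - g (i-1) else g i with hd
    obtain ⟨Φ, hΦ⟩ := exists_phi d
    have hstep : ∀ i : ℤ, Φ (i+1) = Φ i + d (i+1) := by
      intro i
      have := hΦ (i+1)
      simpa using this
    have hstep' : ∀ i : ℤ, Φ (i-1) = Φ i - d i := by
      intro i; have := hΦ i; linarith
    refine ⟨Φ, ?_, ?_⟩
    · intro i
      rw [hstep i, hstep' i]
      rcases le_or_gt i p with hip | hip
      · -- first argument equals Φ i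
        have h1 : Φ i + d (i+1) + g i - k = Φ i := by
          rcases lt_or_eq_of_le hip with h | rfl
          · have : d (i+1) = k - g i := by
              simp only [hd]; rw [if_pos (by omega : i + 1 ≤ p)]
              simp
            rw [this]; ring
          · have : d (i+1) = g (i+1) := by
              simp only [hd]; rw [if_neg (by omega)]
            rw [this]; linarith [hp]
        have h2 : Φ i - d i + g i ≤ Φ i := by
          have : d i = k - g (i-1) := by simp only [hd]; rw [if_pos hip]
          rw [this]
          have := hc1 (i-1)
          simp only [sub_add_cancel] at this
          linarith
        rw [max_eq_left (by linarith), h1]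
      · -- second argument equals Φ i
        have h2 : Φ i - d i + g i = Φ i := by
          have : d i = g i := by simp only [hd]; rw [if_neg (by omega)]
          rw [this]; ring
        have h1 : Φ i + d (i+1) + g i - k ≤ Φ i := by
          have : d (i+1) = g (i+1) := by simp only [hd]; rw [if_neg (by omega)]
          rw [this]
          linarith [hc1 i]
        rw [max_eq_right (by linarith), h2]
    · intro M
      constructor
      · refine ⟨max M (max M₀ p), le_max_left _ _, ?_⟩
        rw [hstep]
        have : d (max M (max M₀ p) + 1) = g (max M (max M₀ p) + 1) := by
          simp only [hd]
          rw [if_neg (by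
            have := le_max_right M (max M₀ p)
            have := le_max_right M₀ p
            omega)]
        rw [this, hg0 _ (Or.inl (by
          have := le_max_right M (max M₀ p)
          have := le_max_left M₀ p
          omega))]
        ring
      · refine ⟨max M (max M₀ (-p)), le_max_left _ _, ?_⟩
        have h1 := hΦ (-(max M (max M₀ (-p))))
        have he : (-(max M (max M₀ (-p))) : ℤ) - 1 = -(max M (max M₀ (-p))) - 1 := rfl
        have hdv : d (-(max M (max M₀ (-p)))) = k := by
          simp only [hd]
          rw [if_pos (by
            have := le_max_right M (max M₀ (-p))
            have := le_max_right M₀ (-p)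
            omega)]
          rw [hg0 _ (Or.inr (by
            have := le_max_right M (max M₀ (-p))
            have := le_max_left M₀ (-p)
            omega))]
          ring
        rw [hdv] at h1
        linarith

set_option linter.unusedSectionVars false
section comb

variable (u : ℤ → ℝ) (hu : ∀ i : ℤ, 0 ≤ u i ∧ u i ≤ 1)
variable (S : ℝ) (hS : ∀ i : ℤ, u (i - 1) + u i ≤ S)

include hu hS in
lemma gam_add_le : ∀ i : ℤ, gam u i + gam u (i+1) ≤ min S 1 := by
  intro i
  have h1 : gam u i ≤ u i := min_le_left _ _
  have h2 : gam u (i+1) ≤ u (i+1) := min_le_left _ _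
  have h3 : gam u (i+1) ≤ 1 - u i := by
    unfold gam
    rw [show (i+1-1:ℤ) = i by ring]
    exact min_le_right _ _
  have h4 := hS (i+1)
  simp only [add_sub_cancel_right] at h4
  refine le_min (by linarith) (by linarith)

include hu hS in
omit hu in
lemma del_add_le : ∀ i : ℤ, del u i + del u (i+1) ≤ min S 1 := by
  intro i
  have h1 : del u i ≤ u (i-1) := min_le_left _ _
  have h2 : del u i ≤ 1 - u i := min_le_right _ _
  have h3 : del u (i+1) ≤ u (i+1-1) := min_le_left _ _
  simp only [add_sub_cancel_right] at h3
  have h4 := hS i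
  refine le_min (by linarith) (by linarith)

include hu hS in
lemma gam_exists (N : ℕ) (hAU : ∀ i : ℤ, ((N : ℤ) ≤ i ∨ i ≤ -(N : ℤ)) → u i = 0)
    (i₀ : ℤ) (hi₀ : S = u (i₀ - 1) + u i₀) :
    ∃ p : ℤ, gam u p + gam u (p+1) = min S 1 := by
  rcases le_or_gt S 1 with hS1 | hS1
  · refine ⟨i₀ - 1, ?_⟩
    have hg1 : gam u (i₀ - 1) = u (i₀ - 1) := by
      unfold gam
      rw [min_eq_left]
      have := hS (i₀ - 1)
      linarith
    have hg2 : gam u (i₀ - 1 + 1) = u i₀ := by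
      have he : i₀ - 1 + 1 = i₀ := by ring
      rw [he]
      unfold gam
      rw [min_eq_left]
      linarith [hi₀]
    rw [hg1, hg2, min_eq_left hS1, hi₀]
  · -- S > 1 : least j with u (j-1) + u j > 1
    classical
    obtain ⟨j, hPj, hmin⟩ := Int.exists_least_of_bdd
      (P := fun z => 1 < u (z - 1) + u z)
      ⟨-(N:ℤ) + 1, by
        intro z hz
        by_contra hlt
        push_neg at hlt
        have h1 : u z = 0 := hAU z (Or.inr (by omega))
        have h2 : u (z-1) = 0 := hAU (z-1) (Or.inr (by omega))
        rw [h1, h2] at hz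
        norm_num at hz⟩
      ⟨i₀, by rw [← hi₀]; exact hS1⟩
    have hnot : ¬ (1 < u (j - 1 - 1) + u (j-1)) := by
      intro h
      have := hmin _ h
      omega
    push_neg at hnot
    refine ⟨j - 1, ?_⟩
    have hg1 : gam u (j - 1) = u (j - 1) := by
      unfold gam
      rw [min_eq_left]
      linarith
    have hg2 : gam u (j - 1 + 1) = 1 - u (j - 1) := by
      have he : j - 1 + 1 = j := by ring
      rw [he]
      unfold gam
      rw [min_eq_right]
      linarith [hPj]
    rw [hg1, hg2, min_eq_right (le_of_lt hS1)]
    ring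

include hu hS in
lemma del_exists (N : ℕ) (hAU : ∀ i : ℤ, ((N : ℤ) ≤ i ∨ i ≤ -(N : ℤ)) → u i = 0)
    (i₀ : ℤ) (hi₀ : S = u (i₀ - 1) + u i₀) :
    ∃ p : ℤ, del u p + del u (p+1) = min S 1 := by
  rcases le_or_gt S 1 with hS1 | hS1
  · refine ⟨i₀, ?_⟩
    have hg1 : del u i₀ = u (i₀ - 1) := by
      unfold del
      rw [min_eq_left]
      linarith [hi₀]
    have hg2 : del u (i₀ + 1) = u i₀ := by
      unfold del
      simp only [add_sub_cancel_right]
      rw [min_eq_left]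
      have := hS (i₀ + 1)
      simp only [add_sub_cancel_right] at this
      linarith
    rw [hg1, hg2, min_eq_left hS1, hi₀]
  · classical
    obtain ⟨j, hPj, hmax⟩ := Int.exists_greatest_of_bdd
      (P := fun z => 1 < u (z - 1) + u z)
      ⟨(N:ℤ), by
        intro z hz
        by_contra hlt
        push_neg at hlt
        have h1 : u z = 0 := hAU z (Or.inl (by omega))
        have h2 : u (z-1) = 0 := hAU (z-1) (Or.inl (by omega))
        rw [h1, h2] at hz
        norm_num at hz⟩
      ⟨i₀, by rw [← hi₀]; exact hS1⟩
    have hnot : ¬ (1 < u (j + 1 - 1) + u (j+1)) := by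
      intro h
      have := hmax _ h
      omega
    push_neg at hnot
    simp only [add_sub_cancel_right] at hnot
    refine ⟨j, ?_⟩
    have hg1 : del u j = 1 - u j := by
      unfold del
      rw [min_eq_right]
      linarith [hPj]
    have hg2 : del u (j + 1) = u j := by
      unfold del
      simp only [add_sub_cancel_right]
      rw [min_eq_left]
      linarith
    rw [hg1, hg2, min_eq_right (le_of_lt hS1)]
    ring

include hu in
lemma gam_nonneg : ∀ i : ℤ, 0 ≤ gam u i := fun i =>
  le_min (hu i).1 (by linarith [(hu (i-1)).2])

include hu in
lemma del_nonneg : ∀ i : ℤ, 0 ≤ del u i := fun i =>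
  le_min (hu (i-1)).1 (by linarith [(hu i).2])

include hu in
lemma gam_zero (N : ℕ) (hAU : ∀ i : ℤ, ((N : ℤ) ≤ i ∨ i ≤ -(N : ℤ)) → u i = 0) :
    ∀ i : ℤ, ((N:ℤ)+1 ≤ i ∨ i ≤ -((N:ℤ)+1)) → gam u i = 0 := by
  intro i hi
  unfold gam
  have h1 : u i = 0 := hAU i (by omega)
  rw [h1, min_eq_left (by linarith [(hu (i-1)).2])]

include hu in
lemma del_zero (N : ℕ) (hAU : ∀ i : ℤ, ((N : ℤ) ≤ i ∨ i ≤ -(N : ℤ)) → u i = 0) :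
    ∀ i : ℤ, ((N:ℤ)+1 ≤ i ∨ i ≤ -((N:ℤ)+1)) → del u i = 0 := by
  intro i hi
  unfold del
  have h1 : u (i-1) = 0 := hAU (i-1) (by omega)
  rw [h1, min_eq_left (by linarith [(hu i).2])]

end comb

/-- Under (AU), the γ-eigenproblem (resp. the δ-eigenproblem) has a solution
satisfying (AΦ) if and only if `k = min S 1`, where `S` is the greatest value of
`u (i-1) + u i`. -/
theorem stmt_9 (u : ℤ → ℝ) (hu : ∀ i : ℤ, 0 ≤ u i ∧ u i ≤ 1) (k : ℝ)
    (N : ℕ) (hN : 0 < N) (hAU : ∀ i : ℤ, ((N : ℤ) ≤ i ∨ i ≤ -(N : ℤ)) → u i = 0)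
    (S : ℝ) (hS : ∀ i : ℤ, u (i - 1) + u i ≤ S) (hS' : ∃ i₀ : ℤ, S = u (i₀ - 1) + u i₀) :
    ((∃ Φ : ℤ → ℝ, SolvesG u k Φ ∧ APhi k Φ) ↔ k = min S 1) ∧
    ((∃ Φ : ℤ → ℝ, SolvesD u k Φ ∧ APhi k Φ) ↔ k = min S 1) := by
  obtain ⟨i₀, hi₀⟩ := hS'
  have hS0 : 0 ≤ S := by
    have h1 := (hu (i₀-1)).1
    have h2 := (hu i₀).1
    linarith [hi₀]
  have hc0 : (0:ℝ) ≤ min S 1 := le_min hS0 zero_le_one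
  have hM₀ : (0:ℤ) < (N:ℤ) + 1 := by positivity
  constructor
  · obtain ⟨p, hp⟩ := gam_exists u hu S hS N hAU i₀ hi₀
    exact abstract (gam u) ((N:ℤ)+1) hM₀ (gam_zero u hu N hAU) (min S 1)
      (gam_add_le u hu S hS) p hp hc0 k
  · obtain ⟨p, hp⟩ := del_exists u hu S hS N hAU i₀ hi₀
    exact abstract (del u) ((N:ℤ)+1) hM₀ (del_zero u hu N hAU) (min S 1)
      (del_add_le u S hS) p hp hc0 k
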